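/- Fix ξ = (ξ₁,ξ₂) ∈ 𝔻, write |ξ|² = ξ₁²+ξ₂² and r² = (x−ξ₁)²+(y−ξ₂)². (i) Suppose h₁, h₂ : closure(𝔻) → ℝ are continuous on the closed unit disk, harmonic in 𝔻, with boundary values h₁(x,y) = −((x−ξ₁)⁴−6(x−ξ₁)²(y−ξ₂)²+(y−ξ₂)⁴)/r⁸ and h₂(x,y) = −4(x−ξ₁)(y−ξ₂)((x−ξ₁)²−(y−ξ₂)²)/r⁸ on ∂𝔻. Then at ξ: ∂h₁/∂x = ∂h₂/∂y = −4ξ₁(ξ₁²−3ξ₂²)/(1−|ξ|²)⁵, ∂h₁/∂y = −∂h₂/∂x = −4ξ₂(−3ξ₁²+ξ₂²)/(1−|ξ|²)⁵, ∂⁴h₁/∂x⁴ = ∂⁴h₁/∂y⁴ = −24(35+4(|ξ|²−1)³+30(|ξ|²−1)²+60(|ξ|²−1))/(1−|ξ|²)⁸, and ∂⁴h₂/∂x⁴ = ∂⁴h₂/∂y⁴ = 0. (ii) If instead the boundary values are h₁(x,y) = −4(x−ξ₁)(y−ξ₂)((x−ξ₁)²−(y−ξ₂)²)/r⁸ and h₂(x,y)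 = ((x−ξ₁)⁴−6(x−ξ₁)²(y−ξ₂)²+(y−ξ₂)⁴)/r⁸ on ∂𝔻, then at ξ: ∂h₁/∂x = ∂h₂/∂y = 4ξ₂(−3ξ₁²+ξ₂²)/(1−|ξ|²)⁵, ∂h₁/∂y = −∂h₂/∂x = −4ξ₁(ξ₁²−3ξ₂²)/(1−|ξ|²)⁵, ∂⁴h₁/∂x⁴ = ∂⁴h₁/∂y⁴ = 0, and ∂⁴h₂/∂x⁴ = ∂⁴h₂/∂y⁴ = 24(35+4(|ξ|²−1)³+30(|ξ|²−1)²+60(|ξ|²−1))/(1−|ξ|²)⁸. -/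

import Mathlib

noncomputable section

open Metric

/-- Partial derivative in the `x` direction of a scalar function, identifying `ℝ²` with `ℂ`
via `z = x + iy`. -/
def px (f : ℂ → ℝ) (z : ℂ) : ℝ := fderiv ℝ f z 1

/-- Partial derivative in the `y` direction. -/
def py (f : ℂ → ℝ) (z : ℂ) : ℝ := fderiv ℝ f z Complex.I

/-- `f` is harmonic on `s`: it is `C²` there and its Laplacian vanishes on `s`. -/
def HarmonicOnSet (f : ℂ → ℝ) (s : Set ℂ) : Prop :=
  ContDiffOn ℝ 2 f s ∧ ∀ z ∈ s, px (px f) z + py (py f) z = 0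

open Complex Filter Topology



/-- directional derivative -/
def pd (e : ℂ) (f : ℂ → ℝ) (z : ℂ) : ℝ := fderiv ℝ f z e

lemma px_eq_pd (f : ℂ → ℝ) : px f = pd 1 f := rfl
lemma py_eq_pd (f : ℂ → ℝ) : py f = pd Complex.I f := rfl

lemma pd_congr {e : ℂ} {f g : ℂ → ℝ} {s : Set ℂ} (hs : IsOpen s) (h : Set.EqOn f g s) :
    Set.EqOn (pd e f) (pd e g) s := fun z hz => by
  unfold pd
  rw [Filter.EventuallyEq.fderiv_eq (h.eventuallyEq_of_mem (hs.mem_nhds hz))]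

lemma pd_re {e : ℂ} {K K' : ℂ → ℂ} {s : Set ℂ} (hs : IsOpen s)
    (hK : ∀ z ∈ s, HasDerivAt K (K' z) z) :
    Set.EqOn (pd e (fun w => (K w).re)) (fun z => (K' z * e).re) s := fun z hz => by
  have h1 : HasFDerivAt (fun w => (K w).re)
      (Complex.reCLM.comp
        ((ContinuousLinearMap.smulRight (1 : ℂ →L[ℂ] ℂ) (K' z)).restrictScalars ℝ)) z :=
    (Complex.reCLM.hasFDerivAt (x := K z)).comp z ((hK z hz).hasFDerivAt.restrictScalars ℝ)
  have h2 : pd e (fun w => (K w).re) z =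
      (Complex.reCLM.comp
        ((ContinuousLinearMap.smulRight (1 : ℂ →L[ℂ] ℂ) (K' z)).restrictScalars ℝ)) e := by
    unfold pd; rw [h1.fderiv]
  rw [h2]
  simp [mul_comm]

lemma pd_iter4 {e : ℂ} {K0 K1 K2 K3 K4 : ℂ → ℂ} {s : Set ℂ} (hs : IsOpen s)
    (h01 : ∀ z ∈ s, HasDerivAt K0 (K1 z) z) (h12 : ∀ z ∈ s, HasDerivAt K1 (K2 z) z)
    (h23 : ∀ z ∈ s, HasDerivAt K2 (K3 z) z) (h34 : ∀ z ∈ s, HasDerivAt K3 (K4 z) z) :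
    Set.EqOn (pd e (pd e (pd e (pd e (fun w => (K0 w).re)))))
      (fun z => (K4 z * e * e * e * e).re) s := by
  have e1 := pd_re (e := e) hs h01
  have e2 : Set.EqOn (pd e (pd e (fun w => (K0 w).re)))
      (fun z => (K2 z * e * e).re) s :=
    (pd_congr hs e1).trans (pd_re hs (fun z hz => (h12 z hz).mul_const e))
  have e3 : Set.EqOn (pd e (pd e (pd e (fun w => (K0 w).re))))
      (fun z => (K3 z * e * e * e).re) s :=
    (pd_congr hs e2).trans (pd_re hs (fun z hz => ((h23 z hz).mul_const e).mul_const e))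
  exact (pd_congr hs e3).trans
    (pd_re hs (fun z hz => (((h34 z hz).mul_const e).mul_const e).mul_const e))

lemma hasDerivAt_div_pow (c : ℂ) {P : ℂ → ℂ} {P'z : ℂ} (m : ℕ) {z : ℂ}
    (hP : HasDerivAt P P'z z) (h : 1 - c * z ≠ 0) :
    HasDerivAt (fun w => P w / (1 - c * w) ^ (m + 1))
      ((P'z * (1 - c * z) + (m + 1) * c * P z) / (1 - c * z) ^ (m + 2)) z := by
  have h1 : HasDerivAt (fun w => 1 - c * w) (-c) z := by
    simpa using ((hasDerivAt_id z).const_mul c).const_sub 1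
  have hd : HasDerivAt (fun w => (1 - c * w) ^ (m + 1))
      ((m + 1) * (1 - c * z) ^ m * -c) z := by
    refine ((hasDerivAt_pow (m + 1) (1 - c * z)).comp z h1).congr_deriv ?_
    simp
  have h2 := hP.div hd (pow_ne_zero (m + 1) h)
  refine h2.congr_deriv ?_
  field_simp
  ring


def F0 (c z : ℂ) : ℂ := z ^ 4 / (1 - c * z) ^ 4
def F1 (c z : ℂ) : ℂ := 4 * z ^ 3 / (1 - c * z) ^ 5
def F2 (c z : ℂ) : ℂ := (12 * z ^ 2 + 8 * c * z ^ 3) / (1 - c * z) ^ 6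
def F3 (c z : ℂ) : ℂ := (24 * z + 72 * c * z ^ 2 + 24 * c ^ 2 * z ^ 3) / (1 - c * z) ^ 7
def F4 (c z : ℂ) : ℂ :=
  (24 + 288 * c * z + 432 * c ^ 2 * z ^ 2 + 96 * c ^ 3 * z ^ 3) / (1 - c * z) ^ 8

lemma hasDerivAt_div_pow' (c : ℂ) {P : ℂ → ℂ} {P'z : ℂ} (m : ℕ) {z : ℂ}
    (hP : HasDerivAt P P'z z) (h : 1 - c * z ≠ 0) :
    HasDerivAt (fun w => P w / (1 - c * w) ^ (m + 1))
      ((P'z * (1 - c * z) + (m + 1) * c * P z) / (1 - c * z) ^ (m + 2)) z := by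
  have h1 : HasDerivAt (fun w => 1 - c * w) (-c) z := by
    simpa using ((hasDerivAt_id z).const_mul c).const_sub 1
  have hd : HasDerivAt (fun w => (1 - c * w) ^ (m + 1))
      ((m + 1) * (1 - c * z) ^ m * -c) z := by
    refine ((hasDerivAt_pow (m + 1) (1 - c * z)).comp z h1).congr_deriv ?_
    simp
  have h2 := hP.div hd (pow_ne_zero (m + 1) h)
  refine h2.congr_deriv ?_
  field_simp
  ring

lemma hasDerivAt_F0 (c z : ℂ) (h : 1 - c * z ≠ 0) : HasDerivAt (F0 c) (F1 c z) z := by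
  have hP : HasDerivAt (fun w : ℂ => w ^ 4) (4 * z ^ 3) z := by
    exact (hasDerivAt_pow 4 z).congr_deriv (by push_cast; ring)
  have h2 := hasDerivAt_div_pow' c 3 hP h
  have h3 : F1 c z = (4 * z ^ 3 * (1 - c * z) + ((3:ℂ) + 1) * c * z ^ 4) / (1 - c * z) ^ (3 + 2) := by
    unfold F1; rw [div_eq_div_iff (pow_ne_zero _ h) (pow_ne_zero _ h)]; push_cast; ring
  rw [h3]; exact h2

lemma hasDerivAt_F1 (c z : ℂ) (h : 1 - c * z ≠ 0) : HasDerivAt (F1 c) (F2 c z) z := by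
  have hP : HasDerivAt (fun w : ℂ => 4 * w ^ 3) (12 * z ^ 2) z := by
    exact ((hasDerivAt_pow 3 z).const_mul (4 : ℂ)).congr_deriv (by push_cast; ring)
  have h2 := hasDerivAt_div_pow' c 4 hP h
  have h3 : F2 c z = (12 * z ^ 2 * (1 - c * z) + ((4:ℂ) + 1) * c * (4 * z ^ 3)) /
      (1 - c * z) ^ (4 + 2) := by
    unfold F2; rw [div_eq_div_iff (pow_ne_zero _ h) (pow_ne_zero _ h)]; push_cast; ring
  rw [h3]; exact h2

lemma hasDerivAt_F2 (c z : ℂ) (h : 1 - c * z ≠ 0) : HasDerivAt (F2 c) (F3 c z) z := by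
  have hP : HasDerivAt (fun w : ℂ => 12 * w ^ 2 + 8 * c * w ^ 3) (24 * z + 24 * c * z ^ 2) z := by
    exact (((hasDerivAt_pow 2 z).const_mul (12 : ℂ)).add
      ((hasDerivAt_pow 3 z).const_mul (8 * c))).congr_deriv (by push_cast; ring)
  have h2 := hasDerivAt_div_pow' c 5 hP h
  have h3 : F3 c z = ((24 * z + 24 * c * z ^ 2) * (1 - c * z) +
      ((5:ℂ) + 1) * c * (12 * z ^ 2 + 8 * c * z ^ 3)) / (1 - c * z) ^ (5 + 2) := by
    unfold F3; rw [div_eq_div_iff (pow_ne_zero _ h) (pow_ne_zero _ h)]; push_cast; ring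
  rw [h3]; exact h2

lemma hasDerivAt_F3 (c z : ℂ) (h : 1 - c * z ≠ 0) : HasDerivAt (F3 c) (F4 c z) z := by
  have hP : HasDerivAt (fun w : ℂ => 24 * w + 72 * c * w ^ 2 + 24 * c ^ 2 * w ^ 3)
      (24 + 144 * c * z + 72 * c ^ 2 * z ^ 2) z := by
    exact ((((hasDerivAt_id z).const_mul (24 : ℂ)).add
      ((hasDerivAt_pow 2 z).const_mul (72 * c))).add
      ((hasDerivAt_pow 3 z).const_mul (24 * c ^ 2))).congr_deriv (by push_cast; ring)
  have h2 := hasDerivAt_div_pow' c 6 hP h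
  have h3 : F4 c z = ((24 + 144 * c * z + 72 * c ^ 2 * z ^ 2) * (1 - c * z) +
      ((6:ℂ) + 1) * c * (24 * z + 72 * c * z ^ 2 + 24 * c ^ 2 * z ^ 3)) / (1 - c * z) ^ (6 + 2) := by
    unfold F4; rw [div_eq_div_iff (pow_ne_zero _ h) (pow_ne_zero _ h)]; push_cast; ring
  rw [h3]; exact h2



lemma pd_contDiffOn {e : ℂ} {u : ℂ → ℝ} {s : Set ℂ} {m n : WithTop ℕ∞} (hs : IsOpen s)
    (hu : ContDiffOn ℝ n u s) (hmn : m + 1 ≤ n) : ContDiffOn ℝ m (pd e u) s := by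
  have h1 : ContDiffOn ℝ m (fderiv ℝ u) s := hu.fderiv_of_isOpen hs hmn
  have h2 := (ContinuousLinearMap.apply ℝ ℝ e).contDiff.comp_contDiffOn h1
  exact h2

lemma pd_differentiableAt {e : ℂ} {u : ℂ → ℝ} {s : Set ℂ} (hs : IsOpen s)
    (hu : ContDiffOn ℝ 2 u s) {z : ℂ} (hz : z ∈ s) : DifferentiableAt ℝ (pd e u) z := by
  have h1 : ContDiffOn ℝ 1 (pd e u) s := pd_contDiffOn hs hu (by norm_num)
  exact ((h1 z hz).differentiableWithinAt one_ne_zero).differentiableAt (hs.mem_nhds hz)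

lemma u_differentiableAt {u : ℂ → ℝ} {s : Set ℂ} (hs : IsOpen s)
    (hu : ContDiffOn ℝ 2 u s) {z : ℂ} (hz : z ∈ s) : DifferentiableAt ℝ u z :=
  ((hu z hz).differentiableWithinAt (by norm_num)).differentiableAt (hs.mem_nhds hz)

/-- at an interior local max of a C² function, the second directional derivative is ≤ 0 -/
lemma second_pd_nonpos {u : ℂ → ℝ} {s : Set ℂ} (hs : IsOpen s) (hu : ContDiffOn ℝ 2 u s)
    {p : ℂ} (hp : p ∈ s) (hmax : IsLocalMax u p) (e : ℂ) : pd e (pd e u) p ≤ 0 := by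
  by_contra hA'
  push_neg at hA'
  set q : ℝ → ℂ := fun t => p + t • e with hq
  have hq0 : q 0 = p := by simp [hq]
  have hqd : ∀ t : ℝ, HasDerivAt q e t := by
    intro t
    simpa [hq] using ((hasDerivAt_id t).smul_const e).const_add p
  have hqt : Filter.Tendsto q (𝓝 0) (𝓝 p) := by
    rw [← hq0]; exact (hqd 0).continuousAt
  have hgd : ∀ t : ℝ, q t ∈ s → HasDerivAt (fun t => u (q t)) (pd e u (q t)) t := by
    intro t ht
    exact ((u_differentiableAt hs hu ht).hasFDerivAt).comp_hasDerivAt t (hqd t)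
  have hg1d : ∀ t : ℝ, q t ∈ s → HasDerivAt (fun t => pd e u (q t)) (pd e (pd e u) (q t)) t := by
    intro t ht
    exact ((pd_differentiableAt hs hu ht).hasFDerivAt).comp_hasDerivAt t (hqd t)
  have hgmax : IsLocalMax (fun t => u (q t)) 0 := by
    have h2 : IsMaxFilter u (𝓝 p) (q 0) := by rw [hq0]; exact hmax
    exact h2.comp_tendsto hqt
  have hg'0 : pd e u p = 0 := by
    have h1 := (hgd 0 (by rw [hq0]; exact hp)).deriv
    have h2 := hgmax.deriv_eq_zero
    rw [hq0] at h1
    rw [← h1]; exact h2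
  have hA2 : HasDerivAt (fun t => pd e u (q t)) (pd e (pd e u) p) 0 := by
    have := hg1d 0 (by rw [hq0]; exact hp)
    rwa [hq0] at this
  have hslope := hasDerivAt_iff_tendsto_slope.mp hA2
  have hev : ∀ᶠ t in 𝓝[≠] (0:ℝ), 0 < slope (fun t => pd e u (q t)) 0 t :=
    hslope.eventually (eventually_gt_nhds hA')
  have hle : 𝓝[>] (0:ℝ) ≤ 𝓝[≠] (0:ℝ) :=
    nhdsWithin_mono 0 (fun x hx => ne_of_gt hx)
  have hev2 : ∀ᶠ t in 𝓝[>] (0:ℝ), 0 < pd e u (q t) := by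
    filter_upwards [hev.filter_mono hle, self_mem_nhdsWithin] with t ht ht0
    have hsl : slope (fun t => pd e u (q t)) 0 t = pd e u (q t) / t := by
      rw [slope_def_field]
      rw [hq0, hg'0]
      simp
    rw [hsl] at ht
    have : (0:ℝ) < t := ht0
    have := mul_pos ht this
    rwa [div_mul_cancel₀] at this
    exact ne_of_gt ht0
  have hevq : ∀ᶠ t in 𝓝 (0:ℝ), q t ∈ s := hqt (hs.mem_nhds hp)
  have hevm : ∀ᶠ t in 𝓝 (0:ℝ), u (q t) ≤ u p := by
    have h3 := hgmax
    unfold IsLocalMax IsMaxFilter at h3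
    filter_upwards [h3] with t ht
    simpa [hq0] using ht
  have hall : ∀ᶠ t in 𝓝[>] (0:ℝ), 0 < pd e u (q t) ∧ q t ∈ s ∧ u (q t) ≤ u p :=
    hev2.and (((hevq.and hevm)).filter_mono nhdsWithin_le_nhds)
  obtain ⟨b, hb, hIoc⟩ := mem_nhdsGT_iff_exists_Ioc_subset.mp hall
  have hb : (0:ℝ) < b := hb
  have hmono : StrictMonoOn (fun t => u (q t)) (Set.Icc 0 b) := by
    apply strictMonoOn_of_deriv_pos (convex_Icc 0 b)
    · intro t ht
      have hts : q t ∈ s := by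
        rcases eq_or_lt_of_le ht.1 with h | h
        · rw [← h, hq0]; exact hp
        · exact (hIoc ⟨h, ht.2⟩).2.1
      exact (hgd t hts).continuousAt.continuousWithinAt
    · intro t ht
      rw [interior_Icc] at ht
      have hts : q t ∈ s := (hIoc ⟨ht.1, le_of_lt ht.2⟩).2.1
      rw [(hgd t hts).deriv]
      exact (hIoc ⟨ht.1, le_of_lt ht.2⟩).1
  have h1 : u (q 0) < u (q b) :=
    hmono ⟨le_rfl, le_of_lt hb⟩ ⟨le_of_lt hb, le_rfl⟩ hb
  have h2 : u (q b) ≤ u p := (hIoc ⟨hb, le_rfl⟩).2.2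
  rw [hq0] at h1
  linarith


lemma px_pd : px = pd 1 := rfl
lemma py_pd : py = pd Complex.I := rfl


lemma pd_neg {e : ℂ} {f : ℂ → ℝ} {z : ℂ} : pd e (fun w => -f w) z = -pd e f z := by
  unfold pd; rw [fderiv_fun_neg]; simp

lemma pd_add {e : ℂ} {f g : ℂ → ℝ} {z : ℂ} (hf : DifferentiableAt ℝ f z)
    (hg : DifferentiableAt ℝ g z) :
    pd e (fun w => f w + g w) z = pd e f z + pd e g z := by
  unfold pd; rw [fderiv_fun_add hf hg]; simp

lemma pd_sub {e : ℂ} {f g : ℂ → ℝ} {z : ℂ} (hf : DifferentiableAt ℝ f z)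
    (hg : DifferentiableAt ℝ g z) :
    pd e (fun w => f w - g w) z = pd e f z - pd e g z := by
  unfold pd; rw [fderiv_fun_sub hf hg]; simp

lemma pd_const_mul {e : ℂ} {f : ℂ → ℝ} {z : ℂ} (c : ℝ) (hf : DifferentiableAt ℝ f z) :
    pd e (fun w => c * f w) z = c * pd e f z := by
  unfold pd; rw [fderiv_const_mul hf c]; simp

lemma pd_sq (e z : ℂ) : pd e (fun w : ℂ => w.re ^ 2 + w.im ^ 2) z
    = 2 * z.re * e.re + 2 * z.im * e.im := by
  have hre : HasFDerivAt (fun w : ℂ => w.re) Complex.reCLM z := Complex.reCLM.hasFDerivAt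
  have him : HasFDerivAt (fun w : ℂ => w.im) Complex.imCLM z := Complex.imCLM.hasFDerivAt
  have h1 : HasFDerivAt (fun w : ℂ => w.re ^ 2 + w.im ^ 2)
      (((2 : ℝ) * z.re ^ (2 - 1)) • Complex.reCLM + ((2 : ℝ) * z.im ^ (2 - 1)) • Complex.imCLM)
      z := by
    exact_mod_cast ((hasDerivAt_pow 2 z.re).comp_hasFDerivAt z hre).add
      ((hasDerivAt_pow 2 z.im).comp_hasFDerivAt z him)
  unfold pd
  rw [h1.fderiv]
  simp

lemma pd_lin (e z : ℂ) (a b : ℝ) :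
    pd e (fun w : ℂ => a * w.re + b * w.im) z = a * e.re + b * e.im := by
  have hre : HasFDerivAt (fun w : ℂ => w.re) Complex.reCLM z := Complex.reCLM.hasFDerivAt
  have him : HasFDerivAt (fun w : ℂ => w.im) Complex.imCLM z := Complex.imCLM.hasFDerivAt
  have h1 := (hre.const_mul a).add (him.const_mul b)
  unfold pd
  rw [HasFDerivAt.fderiv (f := fun w : ℂ => a * w.re + b * w.im) h1]
  simp

lemma harmonic_neg {u : ℂ → ℝ} {s : Set ℂ} (h : HarmonicOnSet u s) :
    HarmonicOnSet (fun z => -u z) s := by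
  refine ⟨h.1.neg, fun z hz => ?_⟩
  have h2 := h.2 z hz
  rw [px_pd, py_pd] at h2 ⊢
  have e1 : pd 1 (fun z => -u z) = fun w => -pd 1 u w := funext fun w => pd_neg
  have e2 : pd Complex.I (fun z => -u z) = fun w => -pd Complex.I u w := funext fun w => pd_neg
  rw [e1, e2, pd_neg, pd_neg]
  linarith

lemma harmonic_sub {u v : ℂ → ℝ} {s : Set ℂ} (hs : IsOpen s) (hu : HarmonicOnSet u s)
    (hv : HarmonicOnSet v s) : HarmonicOnSet (fun z => u z - v z) s := by
  refine ⟨hu.1.sub hv.1, fun z hz => ?_⟩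
  have key : ∀ e : ℂ, pd e (pd e (fun w => u w - v w)) z
      = pd e (pd e u) z - pd e (pd e v) z := by
    intro e
    have heq : Set.EqOn (pd e (fun w => u w - v w)) (fun w => pd e u w - pd e v w) s :=
      fun w hw => pd_sub (u_differentiableAt hs hu.1 hw) (u_differentiableAt hs hv.1 hw)
    rw [pd_congr hs heq hz]
    exact pd_sub (pd_differentiableAt hs hu.1 hz) (pd_differentiableAt hs hv.1 hz)
  have h2 := hu.2 z hz
  have h3 := hv.2 z hz
  rw [px_pd, py_pd] at h2 h3 ⊢
  rw [key 1, key Complex.I]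
  linarith

lemma max_principle {u : ℂ → ℝ} (hc : ContinuousOn u (closedBall (0:ℂ) 1))
    (hu : HarmonicOnSet u (ball (0:ℂ) 1)) (h0 : ∀ z ∈ sphere (0:ℂ) 1, u z = 0) :
    ∀ z ∈ ball (0:ℂ) 1, u z = 0 := by
  have key : ∀ w : ℂ → ℝ, ContinuousOn w (closedBall (0:ℂ) 1) →
      HarmonicOnSet w (ball (0:ℂ) 1) → (∀ z ∈ sphere (0:ℂ) 1, w z = 0) →
      ∀ z ∈ ball (0:ℂ) 1, w z ≤ 0 := by
    intro w hwc hwh hw0 z hz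
    by_contra hpos
    push_neg at hpos
    set ε := w z / 2 with hε
    have hε0 : 0 < ε := by rw [hε]; linarith
    set v : ℂ → ℝ := fun y => w y + ε * (y.re ^ 2 + y.im ^ 2) with hv
    have hvc : ContinuousOn v (closedBall (0:ℂ) 1) := by
      apply hwc.add
      apply Continuous.continuousOn
      continuity
    obtain ⟨p, hpmem, hpmax⟩ := (isCompact_closedBall (0:ℂ) 1).exists_isMaxOn
      ⟨0, mem_closedBall_self zero_le_one⟩ hvc
    by_cases hpball : p ∈ ball (0:ℂ) 1
    · -- interior maximum: contradiction with positive Laplacian of v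
      exfalso
      have hlm : IsLocalMax v p := hpmax.isLocalMax
        (Filter.mem_of_superset (isOpen_ball.mem_nhds hpball) ball_subset_closedBall)
      have hsq : ContDiff ℝ 2 (fun y : ℂ => ε * (y.re ^ 2 + y.im ^ 2)) := by
        have h1 : ContDiff ℝ 2 (fun y : ℂ => y.re) := Complex.reCLM.contDiff.of_le le_top
        have h2 : ContDiff ℝ 2 (fun y : ℂ => y.im) := Complex.imCLM.contDiff.of_le le_top
        exact contDiff_const.mul ((h1.pow 2).add (h2.pow 2))
      have hvC2 : ContDiffOn ℝ 2 v (ball (0:ℂ) 1) := hwh.1.add hsq.contDiffOn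
      have h1 : pd 1 (pd 1 v) p + pd Complex.I (pd Complex.I v) p ≤ 0 :=
        add_nonpos (second_pd_nonpos isOpen_ball hvC2 hpball hlm 1)
          (second_pd_nonpos isOpen_ball hvC2 hpball hlm Complex.I)
      have hcomp : ∀ e : ℂ, pd e (pd e v) p
          = pd e (pd e w) p + (2 * ε * e.re * e.re + 2 * ε * e.im * e.im) := by
        intro e
        have hlindiff : ∀ y : ℂ, DifferentiableAt ℝ
            (fun y : ℂ => 2 * ε * e.re * y.re + 2 * ε * e.im * y.im) y := by
          intro y
          apply DifferentiableAt.add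
          · exact (Complex.reCLM.differentiable.differentiableAt).const_mul _
          · exact (Complex.imCLM.differentiable.differentiableAt).const_mul _
        have heq : Set.EqOn (pd e v)
            (fun y => pd e w y + (2 * ε * e.re * y.re + 2 * ε * e.im * y.im))
            (ball (0:ℂ) 1) := by
          intro y hy
          have hd1 : DifferentiableAt ℝ w y := u_differentiableAt isOpen_ball hwh.1 hy
          have hd2 : DifferentiableAt ℝ (fun y : ℂ => ε * (y.re ^ 2 + y.im ^ 2)) y :=
            (hsq.differentiable (by norm_num)).differentiableAt
          have h3 : pd e v y = pd e w y + pd e (fun y : ℂ => ε * (y.re ^ 2 + y.im ^ 2)) y :=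
            pd_add hd1 hd2
          have h4 : DifferentiableAt ℝ (fun w : ℂ => w.re ^ 2 + w.im ^ 2) y := by
            have : ContDiff ℝ 2 (fun y : ℂ => y.re ^ 2 + y.im ^ 2) := by
              have h1 : ContDiff ℝ 2 (fun y : ℂ => y.re) := Complex.reCLM.contDiff.of_le le_top
              have h2 : ContDiff ℝ 2 (fun y : ℂ => y.im) := Complex.imCLM.contDiff.of_le le_top
              exact (h1.pow 2).add (h2.pow 2)
            exact (this.differentiable (by norm_num)).differentiableAt
          rw [h3, pd_const_mul ε h4, pd_sq]
          ring
        rw [pd_congr isOpen_ball heq hpball]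
        have h5 : pd e (fun y => pd e w y + (2 * ε * e.re * y.re + 2 * ε * e.im * y.im)) p
            = pd e (pd e w) p + pd e (fun y : ℂ => 2 * ε * e.re * y.re + 2 * ε * e.im * y.im) p :=
          pd_add (pd_differentiableAt isOpen_ball hwh.1 hpball) (hlindiff p)
        rw [h5, pd_lin]
      have h6 := hwh.2 p hpball
      rw [px_pd, py_pd] at h6
      have h7 := hcomp 1
      have h8 := hcomp Complex.I
      simp [Complex.I_re, Complex.I_im, Complex.one_re, Complex.one_im] at h7 h8
      rw [h7, h8] at h1
      linarith
    · -- maximum on the boundary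
      have hnorm1 : ‖p‖ = 1 := by
        have h1 : ‖p‖ ≤ 1 := mem_closedBall_zero_iff.mp hpmem
        have h2 : ¬ ‖p‖ < 1 := fun h => hpball (mem_ball_zero_iff.mpr h)
        linarith [lt_or_ge (‖p‖) 1, not_lt.mp h2]
      have hsph : p ∈ sphere (0:ℂ) 1 := mem_sphere_zero_iff_norm.mpr hnorm1
      have hnp : p.re ^ 2 + p.im ^ 2 = 1 := by
        have h4 : Complex.normSq p = 1 := by
          rw [Complex.normSq_eq_norm_sq, hnorm1]; norm_num
        rw [Complex.normSq_apply] at h4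
        nlinarith [h4]
      have hvp : v p = ε := by rw [hv]; simp [hw0 p hsph, hnp]
      have hvz : v z ≤ v p := hpmax (ball_subset_closedBall hz)
      rw [hvp, hv] at hvz
      have hz2 : 0 ≤ z.re ^ 2 + z.im ^ 2 := by positivity
      simp only at hvz
      nlinarith [hvz, hz2, hε0, hpos]
  intro z hz
  have h1 := key u hc hu h0 z hz
  have h2 := key (fun y => -u y) hc.neg (harmonic_neg hu)
    (fun y hy => by simp [h0 y hy]) z hz
  linarith

lemma pd_iter2 {e : ℂ} {K0 K1 K2 : ℂ → ℂ} {s : Set ℂ} (hs : IsOpen s)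
    (h01 : ∀ z ∈ s, HasDerivAt K0 (K1 z) z) (h12 : ∀ z ∈ s, HasDerivAt K1 (K2 z) z) :
    Set.EqOn (pd e (pd e (fun w => (K0 w).re))) (fun z => (K2 z * e * e).re) s := by
  have e1 := pd_re (e := e) hs h01
  exact (pd_congr hs e1).trans (pd_re hs (fun z hz => (h12 z hz).mul_const e))

lemma harmonic_ext_unique {h H : ℂ → ℝ} (hc : ContinuousOn h (closedBall (0:ℂ) 1))
    (Hc : ContinuousOn H (closedBall (0:ℂ) 1)) (hh : HarmonicOnSet h (ball (0:ℂ) 1))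
    (HH : HarmonicOnSet H (ball (0:ℂ) 1)) (hbd : ∀ z ∈ sphere (0:ℂ) 1, h z = H z) :
    ∀ z ∈ ball (0:ℂ) 1, h z = H z := by
  have hmp := max_principle (u := fun z => h z - H z) (hc.sub Hc)
    (harmonic_sub isOpen_ball hh HH) (fun z hz => by show h z - H z = 0; rw [hbd z hz]; ring)
  intro z hz
  have := hmp z hz
  linarith

section Candidates

variable {ξ : ℂ} (hξ : ‖ξ‖ < 1)

lemma bigS_open : IsOpen {z : ℂ | 1 - (starRingEnd ℂ) ξ * z ≠ 0} := by
  have : {z : ℂ | 1 - (starRingEnd ℂ) ξ * z ≠ 0}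
      = (fun z => 1 - (starRingEnd ℂ) ξ * z) ⁻¹' ({0}ᶜ) := rfl
  rw [this]
  exact IsOpen.preimage (by continuity) isOpen_compl_singleton

include hξ in
lemma closedBall_subset_bigS :
    closedBall (0:ℂ) 1 ⊆ {z : ℂ | 1 - (starRingEnd ℂ) ξ * z ≠ 0} := by
  intro z hz
  simp only [Set.mem_setOf_eq]
  intro h
  have h1 : (starRingEnd ℂ) ξ * z = 1 := (sub_eq_zero.mp h).symm
  have h2 : ‖(starRingEnd ℂ) ξ * z‖ < 1 := by
    rw [norm_mul]
    have hz1 : ‖z‖ ≤ 1 := mem_closedBall_zero_iff.mp hz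
    have hξ' : ‖(starRingEnd ℂ) ξ‖ < 1 := by rwa [RCLike.norm_conj]
    calc ‖(starRingEnd ℂ) ξ‖ * ‖z‖ ≤ ‖(starRingEnd ℂ) ξ‖ * 1 := by
          apply mul_le_mul_of_nonneg_left hz1 (norm_nonneg _)
      _ < 1 := by rwa [mul_one]
  rw [h1] at h2
  simp at h2

end Candidates

section Cand2

variable {ξ : ℂ} (hξ : ‖ξ‖ < 1)

private abbrev cc (ξ : ℂ) : ℂ := (starRingEnd ℂ) ξ
private abbrev bigS (ξ : ℂ) : Set ℂ := {z : ℂ | 1 - (starRingEnd ℂ) ξ * z ≠ 0}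

include hξ in
lemma ball_subset_bigS : ball (0:ℂ) 1 ⊆ bigS ξ :=
  subset_trans ball_subset_closedBall (closedBall_subset_bigS hξ)

include hξ in
lemma xi_mem_bigS : ξ ∈ bigS ξ :=
  ball_subset_bigS hξ (mem_ball_zero_iff.mpr hξ)

lemma cand_chain0 (a : ℂ) : ∀ z ∈ bigS ξ, HasDerivAt (fun w => a * F0 (cc ξ) w)
    (a * F1 (cc ξ) z) z := fun z hz => (hasDerivAt_F0 _ z hz).const_mul a

lemma cand_chain1 (a : ℂ) : ∀ z ∈ bigS ξ, HasDerivAt (fun w => a * F1 (cc ξ) w)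
    (a * F2 (cc ξ) z) z := fun z hz => (hasDerivAt_F1 _ z hz).const_mul a

lemma cand_chain2 (a : ℂ) : ∀ z ∈ bigS ξ, HasDerivAt (fun w => a * F2 (cc ξ) w)
    (a * F3 (cc ξ) z) z := fun z hz => (hasDerivAt_F2 _ z hz).const_mul a

lemma cand_chain3 (a : ℂ) : ∀ z ∈ bigS ξ, HasDerivAt (fun w => a * F3 (cc ξ) w)
    (a * F4 (cc ξ) z) z := fun z hz => (hasDerivAt_F3 _ z hz).const_mul a

lemma cand_diffOn (a : ℂ) : DifferentiableOn ℂ (fun w => a * F0 (cc ξ) w) (bigS ξ) :=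
  fun z hz => (cand_chain0 a z hz).differentiableAt.differentiableWithinAt

include hξ in
lemma cand_contOn (a : ℂ) : ContinuousOn (fun z => (a * F0 (cc ξ) z).re) (closedBall (0:ℂ) 1) := by
  have h1 : ContinuousOn (fun w => a * F0 (cc ξ) w) (closedBall (0:ℂ) 1) :=
    ((cand_diffOn a).continuousOn).mono (closedBall_subset_bigS hξ)
  exact Complex.continuous_re.comp_continuousOn h1

include hξ in
lemma cand_harmonic (a : ℂ) : HarmonicOnSet (fun z => (a * F0 (cc ξ) z).re) (ball (0:ℂ) 1) := by
  constructor
  · have h1 : ContDiffOn ℂ 2 (fun w => a * F0 (cc ξ) w) (bigS ξ) :=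
      (cand_diffOn a).contDiffOn bigS_open
    have h2 : ContDiffOn ℝ 2 (fun w => a * F0 (cc ξ) w) (bigS ξ) := h1.restrict_scalars ℝ
    have h3 : ContDiffOn ℝ 2 (fun z => (a * F0 (cc ξ) z).re) (bigS ξ) :=
      Complex.reCLM.contDiff.comp_contDiffOn h2
    exact h3.mono (ball_subset_bigS hξ)
  · intro z hz
    have hzS : z ∈ bigS ξ := ball_subset_bigS hξ hz
    rw [px_pd, py_pd]
    rw [pd_iter2 bigS_open (cand_chain0 a) (cand_chain1 a) hzS,
      pd_iter2 bigS_open (cand_chain0 a) (cand_chain1 a) hzS]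
    simp only []
    rw [mul_one, mul_one, mul_assoc, Complex.I_mul_I, mul_neg_one]
    simp

include hξ in
lemma F0_on_sphere {z : ℂ} (hz : z ∈ sphere (0:ℂ) 1) :
    F0 (cc ξ) z = (z - ξ) ^ 4 / ((Complex.normSq (z - ξ) : ℝ) : ℂ) ^ 4 := by
  have hz1 : ‖z‖ = 1 := mem_sphere_zero_iff_norm.mp hz
  have hns : Complex.normSq z = 1 := by
    rw [Complex.normSq_eq_norm_sq, hz1]; norm_num
  have hzz : z * (starRingEnd ℂ) z = 1 := by
    rw [Complex.mul_conj, hns]; norm_num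
  have hzne : z ≠ 0 := by
    intro h; rw [h] at hz1; simp at hz1
  have hwne : z - ξ ≠ 0 := by
    intro h
    have h2 : z = ξ := sub_eq_zero.mp h
    rw [h2] at hz1; rw [hz1] at hξ; exact lt_irrefl _ hξ
  have hcne : (starRingEnd ℂ) (z - ξ) ≠ 0 := by
    rw [Ne, map_eq_zero]; exact hwne
  have hnsw : Complex.normSq (z - ξ) ≠ 0 := by
    rwa [Ne, Complex.normSq_eq_zero]
  have hden : (1:ℂ) - (starRingEnd ℂ) ξ * z = z * (starRingEnd ℂ) (z - ξ) := by
    rw [map_sub, mul_sub, hzz]; ring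
  unfold F0
  rw [hden, mul_pow]
  rw [div_eq_div_iff (mul_ne_zero (pow_ne_zero _ hzne) (pow_ne_zero _ hcne))
    (pow_ne_zero _ (by exact_mod_cast hnsw))]
  rw [show ((Complex.normSq (z - ξ) : ℝ) : ℂ) = (z - ξ) * (starRingEnd ℂ) (z - ξ) from
    (Complex.mul_conj _).symm]
  ring

end Cand2

section Cand3

variable {ξ : ℂ} (hξ : ‖ξ‖ < 1)

include hξ in
lemma bd_negone {z : ℂ} (hz : z ∈ sphere (0:ℂ) 1) :
    ((-1 : ℂ) * F0 (cc ξ) z).re =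
      -((z.re - ξ.re) ^ 4 - 6 * (z.re - ξ.re) ^ 2 * (z.im - ξ.im) ^ 2 +
        (z.im - ξ.im) ^ 4) / ((z.re - ξ.re) ^ 2 + (z.im - ξ.im) ^ 2) ^ 4 := by
  rw [F0_on_sphere hξ hz]
  have hn : Complex.normSq (z - ξ) = (z.re - ξ.re) ^ 2 + (z.im - ξ.im) ^ 2 := by
    rw [Complex.normSq_apply]; simp [Complex.sub_re, Complex.sub_im]; ring
  rw [show (-1 : ℂ) * ((z - ξ) ^ 4 / ((Complex.normSq (z - ξ) : ℝ) : ℂ) ^ 4)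
      = (-(z - ξ) ^ 4) / (((Complex.normSq (z - ξ)) ^ 4 : ℝ) : ℂ) from by push_cast; ring]
  rw [Complex.div_ofReal_re, hn]
  congr 1
  simp [pow_succ, Complex.mul_re, Complex.mul_im, Complex.sub_re, Complex.sub_im]
  ring

include hξ in
lemma bd_I {z : ℂ} (hz : z ∈ sphere (0:ℂ) 1) :
    ((Complex.I : ℂ) * F0 (cc ξ) z).re =
      -(4 * (z.re - ξ.re) * (z.im - ξ.im) * ((z.re - ξ.re) ^ 2 - (z.im - ξ.im) ^ 2)) /
        ((z.re - ξ.re) ^ 2 + (z.im - ξ.im) ^ 2) ^ 4 := by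
  rw [F0_on_sphere hξ hz]
  have hn : Complex.normSq (z - ξ) = (z.re - ξ.re) ^ 2 + (z.im - ξ.im) ^ 2 := by
    rw [Complex.normSq_apply]; simp [Complex.sub_re, Complex.sub_im]; ring
  rw [show (Complex.I : ℂ) * ((z - ξ) ^ 4 / ((Complex.normSq (z - ξ) : ℝ) : ℂ) ^ 4)
      = (Complex.I * (z - ξ) ^ 4) / (((Complex.normSq (z - ξ)) ^ 4 : ℝ) : ℂ) from by
        push_cast; ring]
  rw [Complex.div_ofReal_re, hn]
  congr 1
  simp [pow_succ, Complex.mul_re, Complex.mul_im, Complex.sub_re, Complex.sub_im]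
  ring

include hξ in
lemma bd_one {z : ℂ} (hz : z ∈ sphere (0:ℂ) 1) :
    ((1 : ℂ) * F0 (cc ξ) z).re =
      ((z.re - ξ.re) ^ 4 - 6 * (z.re - ξ.re) ^ 2 * (z.im - ξ.im) ^ 2 +
        (z.im - ξ.im) ^ 4) / ((z.re - ξ.re) ^ 2 + (z.im - ξ.im) ^ 2) ^ 4 := by
  rw [F0_on_sphere hξ hz]
  have hn : Complex.normSq (z - ξ) = (z.re - ξ.re) ^ 2 + (z.im - ξ.im) ^ 2 := by
    rw [Complex.normSq_apply]; simp [Complex.sub_re, Complex.sub_im]; ring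
  rw [show (1 : ℂ) * ((z - ξ) ^ 4 / ((Complex.normSq (z - ξ) : ℝ) : ℂ) ^ 4)
      = ((z - ξ) ^ 4) / (((Complex.normSq (z - ξ)) ^ 4 : ℝ) : ℂ) from by push_cast; ring]
  rw [Complex.div_ofReal_re, hn]
  congr 1
  simp [pow_succ, Complex.mul_re, Complex.mul_im, Complex.sub_re, Complex.sub_im]
  ring

lemma conj_mul_self : (starRingEnd ℂ) ξ * ξ = ((ξ.re ^ 2 + ξ.im ^ 2 : ℝ) : ℂ) := by
  apply Complex.ext <;>
    simp only [Complex.mul_re, Complex.mul_im, Complex.conj_re, Complex.conj_im,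
      Complex.ofReal_re, Complex.ofReal_im] <;> ring

lemma F1_at_xi : F1 (cc ξ) ξ = (4 * ξ ^ 3) / (((1 - (ξ.re ^ 2 + ξ.im ^ 2)) ^ 5 : ℝ) : ℂ) := by
  unfold F1
  rw [show (1 : ℂ) - cc ξ * ξ = ((1 - (ξ.re ^ 2 + ξ.im ^ 2) : ℝ) : ℂ) from by
    rw [conj_mul_self]; push_cast; ring]
  norm_cast

lemma F4_at_xi : F4 (cc ξ) ξ =
    (((24 + 288 * (ξ.re ^ 2 + ξ.im ^ 2) + 432 * (ξ.re ^ 2 + ξ.im ^ 2) ^ 2 +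
      96 * (ξ.re ^ 2 + ξ.im ^ 2) ^ 3) : ℝ) : ℂ) /
    (((1 - (ξ.re ^ 2 + ξ.im ^ 2)) ^ 8 : ℝ) : ℂ) := by
  unfold F4
  rw [show (24 : ℂ) + 288 * cc ξ * ξ + 432 * (cc ξ) ^ 2 * ξ ^ 2 + 96 * (cc ξ) ^ 3 * ξ ^ 3
      = 24 + 288 * (cc ξ * ξ) + 432 * (cc ξ * ξ) ^ 2 + 96 * (cc ξ * ξ) ^ 3 from by ring]
  rw [show (1 : ℂ) - cc ξ * ξ = ((1 - (ξ.re ^ 2 + ξ.im ^ 2) : ℝ) : ℂ) from by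
    rw [conj_mul_self]; push_cast; ring]
  rw [conj_mul_self]
  norm_cast

end Cand3

section Master

variable {ξ : ℂ}

lemma master (hξb : ξ ∈ ball (0:ℂ) 1) (a : ℂ) {h : ℂ → ℝ}
    (hc : ContinuousOn h (closedBall (0:ℂ) 1)) (hh : HarmonicOnSet h (ball (0:ℂ) 1))
    (hbd : ∀ z ∈ sphere (0:ℂ) 1, h z = (a * F0 (cc ξ) z).re) :
    (∀ e : ℂ, pd e h ξ = (a * F1 (cc ξ) ξ * e).re) ∧
    (∀ e : ℂ, pd e (pd e (pd e (pd e h))) ξ = (a * F4 (cc ξ) ξ * e * e * e * e).re) := by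
  have hξ : ‖ξ‖ < 1 := mem_ball_zero_iff.mp hξb
  have hEq : Set.EqOn h (fun z => (a * F0 (cc ξ) z).re) (ball (0:ℂ) 1) :=
    fun z hz => harmonic_ext_unique hc (cand_contOn hξ a) hh (cand_harmonic hξ a) hbd z hz
  constructor
  · intro e
    rw [pd_congr isOpen_ball hEq hξb]
    exact pd_re bigS_open (cand_chain0 a) (xi_mem_bigS hξ)
  · intro e
    have t1 := pd_congr (e := e) isOpen_ball hEq
    have t2 := pd_congr (e := e) isOpen_ball t1
    have t3 := pd_congr (e := e) isOpen_ball t2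
    have t4 := pd_congr (e := e) isOpen_ball t3
    rw [t4 hξb]
    exact pd_iter4 bigS_open (cand_chain0 a) (cand_chain1 a) (cand_chain2 a)
      (cand_chain3 a) (xi_mem_bigS hξ)

lemma val1_eval (a e : ℂ) : (a * F1 (cc ξ) ξ * e).re
    = (a * (4 * ξ ^ 3) * e).re / (1 - (ξ.re ^ 2 + ξ.im ^ 2)) ^ 5 := by
  rw [F1_at_xi,
    show a * ((4 * ξ ^ 3) / (((1 - (ξ.re ^ 2 + ξ.im ^ 2)) ^ 5 : ℝ) : ℂ)) * e
      = (a * (4 * ξ ^ 3) * e) / (((1 - (ξ.re ^ 2 + ξ.im ^ 2)) ^ 5 : ℝ) : ℂ) from by ring,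
    Complex.div_ofReal_re]

lemma val4_eval (a e : ℂ) : (a * F4 (cc ξ) ξ * e * e * e * e).re
    = (a * e * e * e * e).re * (24 + 288 * (ξ.re ^ 2 + ξ.im ^ 2) +
        432 * (ξ.re ^ 2 + ξ.im ^ 2) ^ 2 + 96 * (ξ.re ^ 2 + ξ.im ^ 2) ^ 3) /
      (1 - (ξ.re ^ 2 + ξ.im ^ 2)) ^ 8 := by
  rw [F4_at_xi,
    show a * ((((24 + 288 * (ξ.re ^ 2 + ξ.im ^ 2) + 432 * (ξ.re ^ 2 + ξ.im ^ 2) ^ 2 +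
          96 * (ξ.re ^ 2 + ξ.im ^ 2) ^ 3) : ℝ) : ℂ) /
        (((1 - (ξ.re ^ 2 + ξ.im ^ 2)) ^ 8 : ℝ) : ℂ)) * e * e * e * e
      = ((a * e * e * e * e) * (((24 + 288 * (ξ.re ^ 2 + ξ.im ^ 2) +
          432 * (ξ.re ^ 2 + ξ.im ^ 2) ^ 2 + 96 * (ξ.re ^ 2 + ξ.im ^ 2) ^ 3) : ℝ) : ℂ)) /
        (((1 - (ξ.re ^ 2 + ξ.im ^ 2)) ^ 8 : ℝ) : ℂ) from by ring,
    Complex.div_ofReal_re]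
  congr 1
  rw [Complex.mul_re, Complex.ofReal_re, Complex.ofReal_im]
  ring

end Master

/-- Derivatives at `ξ` of the harmonic extensions of the two families of degree-2 boundary
data `h^{(2,1)}` (part (i)) and `h^{(2,2)}` (part (ii)). -/
theorem robin_function_h2l (ξ : ℂ) (hξ : ξ ∈ ball (0 : ℂ) 1) :
    (∀ h1 h2 : ℂ → ℝ,
      ContinuousOn h1 (closedBall (0 : ℂ) 1) → ContinuousOn h2 (closedBall (0 : ℂ) 1) →
      HarmonicOnSet h1 (ball (0 : ℂ) 1) → HarmonicOnSet h2 (ball (0 : ℂ) 1) →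
      (∀ z ∈ sphere (0 : ℂ) 1,
        h1 z = -((z.re - ξ.re) ^ 4 - 6 * (z.re - ξ.re) ^ 2 * (z.im - ξ.im) ^ 2 +
            (z.im - ξ.im) ^ 4) / ((z.re - ξ.re) ^ 2 + (z.im - ξ.im) ^ 2) ^ 4) →
      (∀ z ∈ sphere (0 : ℂ) 1,
        h2 z = -(4 * (z.re - ξ.re) * (z.im - ξ.im) *
            ((z.re - ξ.re) ^ 2 - (z.im - ξ.im) ^ 2)) /
          ((z.re - ξ.re) ^ 2 + (z.im - ξ.im) ^ 2) ^ 4) →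
      (px h1 ξ = -(4 * ξ.re * (ξ.re ^ 2 - 3 * ξ.im ^ 2)) /
          (1 - (ξ.re ^ 2 + ξ.im ^ 2)) ^ 5 ∧
       py h2 ξ = -(4 * ξ.re * (ξ.re ^ 2 - 3 * ξ.im ^ 2)) /
          (1 - (ξ.re ^ 2 + ξ.im ^ 2)) ^ 5 ∧
       py h1 ξ = -(4 * ξ.im * (-(3 * ξ.re ^ 2) + ξ.im ^ 2)) /
          (1 - (ξ.re ^ 2 + ξ.im ^ 2)) ^ 5 ∧
       px h2 ξ = 4 * ξ.im * (-(3 * ξ.re ^ 2) + ξ.im ^ 2) /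
          (1 - (ξ.re ^ 2 + ξ.im ^ 2)) ^ 5 ∧
       px (px (px (px h1))) ξ =
          -(24 * (35 + 4 * ((ξ.re ^ 2 + ξ.im ^ 2) - 1) ^ 3 +
              30 * ((ξ.re ^ 2 + ξ.im ^ 2) - 1) ^ 2 + 60 * ((ξ.re ^ 2 + ξ.im ^ 2) - 1))) /
            (1 - (ξ.re ^ 2 + ξ.im ^ 2)) ^ 8 ∧
       py (py (py (py h1))) ξ =
          -(24 * (35 + 4 * ((ξ.re ^ 2 + ξ.im ^ 2) - 1) ^ 3 +
              30 * ((ξ.re ^ 2 + ξ.im ^ 2) - 1) ^ 2 + 60 * ((ξ.re ^ 2 + ξ.im ^ 2) - 1))) /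
            (1 - (ξ.re ^ 2 + ξ.im ^ 2)) ^ 8 ∧
       px (px (px (px h2))) ξ = 0 ∧
       py (py (py (py h2))) ξ = 0)) ∧
    (∀ h1 h2 : ℂ → ℝ,
      ContinuousOn h1 (closedBall (0 : ℂ) 1) → ContinuousOn h2 (closedBall (0 : ℂ) 1) →
      HarmonicOnSet h1 (ball (0 : ℂ) 1) → HarmonicOnSet h2 (ball (0 : ℂ) 1) →
      (∀ z ∈ sphere (0 : ℂ) 1,
        h1 z = -(4 * (z.re - ξ.re) * (z.im - ξ.im) *
            ((z.re - ξ.re) ^ 2 - (z.im - ξ.im) ^ 2)) /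
          ((z.re - ξ.re) ^ 2 + (z.im - ξ.im) ^ 2) ^ 4) →
      (∀ z ∈ sphere (0 : ℂ) 1,
        h2 z = ((z.re - ξ.re) ^ 4 - 6 * (z.re - ξ.re) ^ 2 * (z.im - ξ.im) ^ 2 +
            (z.im - ξ.im) ^ 4) / ((z.re - ξ.re) ^ 2 + (z.im - ξ.im) ^ 2) ^ 4) →
      (px h1 ξ = 4 * ξ.im * (-(3 * ξ.re ^ 2) + ξ.im ^ 2) /
          (1 - (ξ.re ^ 2 + ξ.im ^ 2)) ^ 5 ∧
       py h2 ξ = 4 * ξ.im * (-(3 * ξ.re ^ 2) + ξ.im ^ 2) /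
          (1 - (ξ.re ^ 2 + ξ.im ^ 2)) ^ 5 ∧
       py h1 ξ = -(4 * ξ.re * (ξ.re ^ 2 - 3 * ξ.im ^ 2)) /
          (1 - (ξ.re ^ 2 + ξ.im ^ 2)) ^ 5 ∧
       px h2 ξ = 4 * ξ.re * (ξ.re ^ 2 - 3 * ξ.im ^ 2) /
          (1 - (ξ.re ^ 2 + ξ.im ^ 2)) ^ 5 ∧
       px (px (px (px h1))) ξ = 0 ∧
       py (py (py (py h1))) ξ = 0 ∧
       px (px (px (px h2))) ξ =
          24 * (35 + 4 * ((ξ.re ^ 2 + ξ.im ^ 2) - 1) ^ 3 +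
              30 * ((ξ.re ^ 2 + ξ.im ^ 2) - 1) ^ 2 + 60 * ((ξ.re ^ 2 + ξ.im ^ 2) - 1)) /
            (1 - (ξ.re ^ 2 + ξ.im ^ 2)) ^ 8 ∧
       py (py (py (py h2))) ξ =
          24 * (35 + 4 * ((ξ.re ^ 2 + ξ.im ^ 2) - 1) ^ 3 +
              30 * ((ξ.re ^ 2 + ξ.im ^ 2) - 1) ^ 2 + 60 * ((ξ.re ^ 2 + ξ.im ^ 2) - 1)) /
            (1 - (ξ.re ^ 2 + ξ.im ^ 2)) ^ 8)) := by
  have hxi : ‖ξ‖ < 1 := mem_ball_zero_iff.mp hξ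
  constructor
  · intro h1 h2 hc1 hc2 hh1 hh2 hb1 hb2
    have m1 := master hξ (-1) hc1 hh1
      (fun z hz => by rw [hb1 z hz]; exact (bd_negone hxi hz).symm)
    have m2 := master hξ Complex.I hc2 hh2
      (fun z hz => by rw [hb2 z hz]; exact (bd_I hxi hz).symm)
    refine ⟨?_, ?_, ?_, ?_, ?_, ?_, ?_, ?_⟩
    · rw [px_pd, m1.1 1, val1_eval]
      congr 1
      simp [pow_succ, Complex.mul_re, Complex.mul_im]
      ring
    · rw [py_pd, m2.1 Complex.I, val1_eval]
      congr 1
      simp [pow_succ, Complex.mul_re, Complex.mul_im]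
      ring
    · rw [py_pd, m1.1 Complex.I, val1_eval]
      congr 1
      simp [pow_succ, Complex.mul_re, Complex.mul_im]
      ring
    · rw [px_pd, m2.1 1, val1_eval]
      congr 1
      simp [pow_succ, Complex.mul_re, Complex.mul_im]
      ring
    · rw [px_pd, m1.2 1, val4_eval]
      rw [show (((-1 : ℂ)) * 1 * 1 * 1 * 1).re = -1 by norm_num]
      congr 1
      ring
    · rw [py_pd, m1.2 Complex.I, val4_eval]
      rw [show (((-1 : ℂ)) * Complex.I * Complex.I * Complex.I * Complex.I).re = -1 by
        simp [Complex.mul_re, Complex.mul_im]]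
      congr 1
      ring
    · rw [px_pd, m2.2 1, val4_eval]
      rw [show ((Complex.I : ℂ) * 1 * 1 * 1 * 1).re = 0 by simp]
      simp
    · rw [py_pd, m2.2 Complex.I, val4_eval]
      rw [show ((Complex.I : ℂ) * Complex.I * Complex.I * Complex.I * Complex.I).re = 0 by
        simp [Complex.mul_re, Complex.mul_im]]
      simp
  · intro h1 h2 hc1 hc2 hh1 hh2 hb1 hb2
    have m1 := master hξ Complex.I hc1 hh1
      (fun z hz => by rw [hb1 z hz]; exact (bd_I hxi hz).symm)
    have m2 := master hξ 1 hc2 hh2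
      (fun z hz => by rw [hb2 z hz]; exact (bd_one hxi hz).symm)
    refine ⟨?_, ?_, ?_, ?_, ?_, ?_, ?_, ?_⟩
    · rw [px_pd, m1.1 1, val1_eval]
      congr 1
      simp [pow_succ, Complex.mul_re, Complex.mul_im]
      ring
    · rw [py_pd, m2.1 Complex.I, val1_eval]
      congr 1
      simp [pow_succ, Complex.mul_re, Complex.mul_im]
      ring
    · rw [py_pd, m1.1 Complex.I, val1_eval]
      congr 1
      simp [pow_succ, Complex.mul_re, Complex.mul_im]
      ring
    · rw [px_pd, m2.1 1, val1_eval]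
      congr 1
      simp [pow_succ, Complex.mul_re, Complex.mul_im]
      ring
    · rw [px_pd, m1.2 1, val4_eval]
      rw [show ((Complex.I : ℂ) * 1 * 1 * 1 * 1).re = 0 by simp]
      simp
    · rw [py_pd, m1.2 Complex.I, val4_eval]
      rw [show ((Complex.I : ℂ) * Complex.I * Complex.I * Complex.I * Complex.I).re = 0 by
        simp [Complex.mul_re, Complex.mul_im]]
      simp
    · rw [px_pd, m2.2 1, val4_eval]
      rw [show (((1 : ℂ)) * 1 * 1 * 1 * 1).re = 1 by norm_num]
      congr 1
      ring
    · rw [py_pd, m2.2 Complex.I, val4_eval]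
      rw [show (((1 : ℂ)) * Complex.I * Complex.I * Complex.I * Complex.I).re = 1 by
        simp [Complex.mul_re, Complex.mul_im]]
      congr 1
      ring
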